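/- Let m ≥ 3 be odd. Then the binary code C_{D_2} is minimal: for all (a,b), (a',b') ∈ F_{2^m} × F_{2^m} such that the codewords c(a,b) and c(a',b') are both nonzero, if the support of c(a',b') is contained in the support of c(a,b) (i.e., for every (x,y) ∈ D_2, Tr(a'xy + b'x) = 1 implies Tr(axy + bx) = 1), then c(a',b') = c(a,b) (i.e., Tr(a'xy + b'x) = Tr(axy + bx) for every (x,y) ∈ D_2). -/

import Mathlib

attribute [local instance] Classical.propDecidable

noncomputable instance (m : ℕ) : Fintype (GaloisField 2 m) := Fintype.ofFinite _

/-- The absolute trace map from `F_{2^m}` to `F_2`. -/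
noncomputable def Tr (m : ℕ) (x : GaloisField 2 m) : ZMod 2 :=
  Algebra.trace (ZMod 2) (GaloisField 2 m) x

/-- For `t ∈ F_2`, `sgn t` is the integer `(-1)^t`. -/
def sgn : ZMod 2 → ℤ := fun t => if t = 0 then 1 else -1

/-- The set `Υ₁ = {r + r⁻¹ : r ∈ F_{2^m}^*, r ≠ 1}`. -/
def Ups1 (m : ℕ) : Set (GaloisField 2 m) :=
  {u | ∃ r : GaloisField 2 m, r ≠ 0 ∧ r ≠ 1 ∧ u = r + r⁻¹}

open Finset

lemma fiber_card {G V : Type*} [AddCommGroup G] [AddCommGroup V] [Fintype G] [Fintype V]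
    [DecidableEq V] (ψ : G →+ V) (hs : Function.Surjective ψ) (c : V) :
    (Finset.univ.filter fun z => ψ z = c).card * Fintype.card V = Fintype.card G := by
  classical
  have key : ∀ v : V, (Finset.univ.filter fun z => ψ z = v).card =
      (Finset.univ.filter fun z => ψ z = c).card := by
    intro v
    obtain ⟨zv, hzv⟩ := hs v
    obtain ⟨zc, hzc⟩ := hs c
    apply Finset.card_bij' (fun z _ => z - zv + zc) (fun z _ => z - zc + zv)
    · intro z hz
      simp only [mem_filter, mem_univ, true_and] at hz ⊢
      simp [map_add, map_sub, hz, hzv, hzc]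
    · intro z hz
      simp only [mem_filter, mem_univ, true_and] at hz ⊢
      simp [map_add, map_sub, hz, hzv, hzc]
    · intro z _; abel
    · intro z _; abel
  have part : ∑ v : V, (Finset.univ.filter fun z => ψ z = v).card = Fintype.card G := by
    rw [← Finset.card_eq_sum_card_fiberwise (fun x _ => Finset.mem_univ (ψ x))]
    rfl
  rw [← part]
  rw [Finset.sum_congr rfl (fun v _ => key v), Finset.sum_const, Finset.card_univ,
    smul_eq_mul, mul_comm]

lemma card_GF (m : ℕ) (h : m ≠ 0) : Fintype.card (GaloisField 2 m) = 2 ^ m := by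
  have := GaloisField.card 2 m h
  simpa [Nat.card_eq_fintype_card] using this

lemma tr_exists (m : ℕ) (a : GaloisField 2 m) (ha : a ≠ 0) : ∃ z, Tr m (a*z) = 1 := by
  have h := traceForm_nondegenerate (ZMod 2) (GaloisField 2 m) |>.1 a
  simp_rw [Algebra.traceForm_apply] at h
  by_contra! hf
  refine ha (h fun z => ?_)
  have h01 : ∀ t : ZMod 2, t ≠ 1 → t = 0 := by decide
  exact h01 _ (hf z)

/-- single fiber count -/
lemma count_tr (m : ℕ) (hm : m ≠ 0) (α : GaloisField 2 m) (hα : α ≠ 0) (c : ZMod 2) :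
    (Finset.univ.filter fun z => Tr m (α*z) = c).card = 2^(m-1) := by
  set ψ : GaloisField 2 m →+ ZMod 2 :=
    { toFun := fun z => Tr m (α*z)
      map_zero' := by simp [Tr]
      map_add' := fun u v => by simp [Tr, mul_add, map_add] } with hψ
  have hs : Function.Surjective ψ := by
    intro v
    have hv : v = 0 ∨ v = 1 := by revert v; decide
    rcases hv with rfl | rfl
    · exact ⟨0, by simp [hψ, Tr]⟩
    · obtain ⟨z, hz⟩ := tr_exists m α hα
      exact ⟨z, hz⟩
  have := fiber_card ψ hs c
  simp only [hψ, AddMonoidHom.coe_mk, ZeroHom.coe_mk] at this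
  rw [card_GF m hm] at this
  have h2 : Fintype.card (ZMod 2) = 2 := by simp
  rw [h2] at this
  have hpow : 2^m = 2^(m-1) * 2 := by
    rw [← pow_succ, Nat.sub_add_cancel (Nat.one_le_iff_ne_zero.2 hm)]
  change (Finset.univ.filter fun z => Tr m (α*z) = c).card * _ = _ at this
  omega

lemma zmod2_cases : ∀ t : ZMod 2, t = 0 ∨ t = 1 := by decide

/-- double fiber count -/
lemma count_tr2 (m : ℕ) (hm : 2 ≤ m) (α β : GaloisField 2 m) (hα : α ≠ 0) (hβ : β ≠ 0)
    (hab : α ≠ β) (c d : ZMod 2) :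
    (Finset.univ.filter fun z => Tr m (α*z) = c ∧ Tr m (β*z) = d).card = 2^(m-2) := by
  set ψ : GaloisField 2 m →+ ZMod 2 × ZMod 2 :=
    { toFun := fun z => (Tr m (α*z), Tr m (β*z))
      map_zero' := by simp [Tr]
      map_add' := fun u v => by simp [Tr, mul_add, map_add] } with hψ
  have hs : Function.Surjective ψ := by
    intro dd
    obtain ⟨u, hu⟩ := tr_exists m α hα
    obtain ⟨v, hv⟩ := tr_exists m β hβ
    have hαβ : α + β ≠ 0 := fun h => hab (by
      have : α = -β := eq_neg_of_add_eq_zero_left h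
      rwa [CharTwo.neg_eq] at this)
    obtain ⟨w, hw⟩ := tr_exists m (α+β) hαβ
    have hw' : Tr m (β*w) = 1 + Tr m (α*w) := by
      have hsum : Tr m (α*w) + Tr m (β*w) = 1 := by
        rw [← hw]; simp [Tr, add_mul, map_add]
      have : ∀ t s : ZMod 2, t + s = 1 → s = 1 + t := by decide
      exact this _ _ hsum
    have key : ∀ (e1 e2 e3 : ZMod 2) (dd : ZMod 2 × ZMod 2),
        dd = (0,0) ∨ dd = (1,e1) ∨ dd = (e2,1) ∨ dd = (e3,1+e3) ∨
        dd = (1,e1)+(e2,1) ∨ dd = (1,e1)+(e3,1+e3) ∨ dd = (e2,1)+(e3,1+e3) ∨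
        dd = (1,e1)+(e2,1)+(e3,1+e3) := by decide
    have hψu : ψ u = (1, Tr m (β*u)) := show (_, _) = _ by simp [hu]
    have hψv : ψ v = (Tr m (α*v), 1) := show (_, _) = _ by simp [hv]
    have hψw : ψ w = (Tr m (α*w), 1 + Tr m (α*w)) := show (_, _) = _ by simp [hw']
    rcases key (Tr m (β*u)) (Tr m (α*v)) (Tr m (α*w)) dd with h|h|h|h|h|h|h|h
    · exact ⟨0, by simp [h]; rfl⟩
    · exact ⟨u, by rw [hψu, h]⟩
    · exact ⟨v, by rw [hψv, h]⟩
    · exact ⟨w, by rw [hψw, h]⟩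
    · exact ⟨u+v, by rw [map_add, hψu, hψv, h]⟩
    · exact ⟨u+w, by rw [map_add, hψu, hψw, h]⟩
    · exact ⟨v+w, by rw [map_add, hψv, hψw, h]⟩
    · exact ⟨u+v+w, by rw [map_add, map_add, hψu, hψv, hψw, h]⟩
  have hfc := fiber_card ψ hs (c, d)
  simp only [hψ, AddMonoidHom.coe_mk, ZeroHom.coe_mk, Prod.mk.injEq] at hfc
  rw [card_GF m (by omega)] at hfc
  have h4 : Fintype.card (ZMod 2 × ZMod 2) = 4 := by simp
  rw [h4] at hfc
  have hpow : 2^m = 2^(m-2) * 4 := by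
    have : m - 2 + 2 = m := by omega
    rw [← this, pow_add]; norm_num
  change (Finset.univ.filter fun z => (Tr m (α*z), Tr m (β*z)) = (c, d)).card * _ = _ at hfc
  simp only [Prod.mk.injEq] at hfc
  omega

section PerX
open Finset

lemma two_eq_zero' (m : ℕ) : (2 : GaloisField 2 m) = 0 := by
  have : ((2:ℕ) : GaloisField 2 m) = 0 := CharP.cast_eq_zero _ 2
  simpa using this

lemma Tr_add (m : ℕ) (u v : GaloisField 2 m) : Tr m (u+v) = Tr m u + Tr m v :=
  map_add (Algebra.trace (ZMod 2) (GaloisField 2 m)) u v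

lemma Tr_zero (m : ℕ) : Tr m 0 = 0 :=
  map_zero (Algebra.trace (ZMod 2) (GaloisField 2 m))

lemma sq_add_one_ne (m : ℕ) (x : GaloisField 2 m) (hx1 : x ≠ 1) : x^2 + 1 ≠ 0 := by
  intro h
  apply hx1
  have h2 := two_eq_zero' m
  have : (x+1)^2 = 0 := by linear_combination h + x * h2
  have := pow_eq_zero_iff (n := 2) (by norm_num) |>.mp this
  have : x = -1 := eq_neg_of_add_eq_zero_left this
  rwa [CharTwo.neg_eq] at this

lemma cnd_iff (m : ℕ) (x y : GaloisField 2 m) :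
    Tr m (y*x^2+x+y) = 0 ↔ Tr m ((x^2+1)*y) = Tr m x := by
  have hr : y*x^2+x+y = (x^2+1)*y + x := by ring
  rw [hr, Tr_add]
  have : ∀ s t : ZMod 2, (s + t = 0 ↔ s = t) := by decide
  exact this _ _

lemma sup_iff (m : ℕ) (a b x y : GaloisField 2 m) :
    Tr m (a*x*y+b*x) = 1 ↔ Tr m ((a*x)*y) = 1 + Tr m (b*x) := by
  have hr : a*x*y+b*x = (a*x)*y + b*x := by ring
  rw [hr, Tr_add]
  have : ∀ s t : ZMod 2, (s + t = 1 ↔ s = 1 + t) := by decide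
  exact this _ _

/-- number of y in the x-fiber of D₂ -/
noncomputable def Ncnt (m : ℕ) (a b x : GaloisField 2 m) : ℕ :=
  (Finset.univ.filter fun y => Tr m (y*x^2+x+y) = 0 ∧ Tr m (a*x*y+b*x) = 1).card

lemma Hx_card (m : ℕ) (hm : m ≠ 0) (x : GaloisField 2 m) (hx1 : x ≠ 1) :
    (Finset.univ.filter fun y => Tr m (y*x^2+x+y) = 0).card = 2^(m-1) := by
  rw [Finset.filter_congr (fun y _ => cnd_iff m x y)]
  exact count_tr m hm _ (sq_add_one_ne m x hx1) _

lemma Ncnt_le (m : ℕ) (hm : m ≠ 0) (a b x : GaloisField 2 m) (hx1 : x ≠ 1) :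
    Ncnt m a b x ≤ 2^(m-1) := by
  rw [← Hx_card m hm x hx1]
  apply Finset.card_le_card
  intro y hy
  simp only [Finset.mem_filter] at hy ⊢
  exact ⟨hy.1, hy.2.1⟩

lemma Ncnt_balanced (m : ℕ) (hm : 2 ≤ m) (a b x : GaloisField 2 m) (hx1 : x ≠ 1)
    (h0 : a*x ≠ 0) (hne : a*x ≠ x^2+1) :
    Ncnt m a b x = 2^(m-2) := by
  rw [Ncnt, Finset.filter_congr
    (fun y _ => and_congr (cnd_iff m x y) (sup_iff m a b x y))]
  exact count_tr2 m hm _ _ (sq_add_one_ne m x hx1) h0 (fun h => hne h.symm) _ _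

lemma Ncnt_a_zero (m : ℕ) (hm : m ≠ 0) (b x : GaloisField 2 m) (hx1 : x ≠ 1) :
    Ncnt m 0 b x = if Tr m (b*x) = 1 then 2^(m-1) else 0 := by
  have hpred : ∀ y : GaloisField 2 m, (Tr m (0*x*y+b*x) = 1) ↔ Tr m (b*x) = 1 := by
    intro y
    have : (0:GaloisField 2 m)*x*y+b*x = b*x := by ring
    rw [this]
  by_cases h : Tr m (b*x) = 1
  · rw [if_pos h, Ncnt, Finset.filter_congr (fun y _ => by
      rw [hpred y, h]; simp only [and_true] : ∀ y ∈ Finset.univ, _ ↔ Tr m (y*x^2+x+y) = 0)]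
    exact Hx_card m hm x hx1
  · rw [if_neg h, Ncnt, Finset.filter_congr (fun y _ => by
      simp only [hpred y, h, and_false] : ∀ y ∈ Finset.univ, _ ↔ False)]
    simp

lemma Ncnt_root (m : ℕ) (hm : m ≠ 0) (a b x : GaloisField 2 m) (hx1 : x ≠ 1)
    (hax : a*x = x^2+1) :
    Ncnt m a b x = if Tr m (x+b*x) = 1 then 2^(m-1) else 0 := by
  have key : ∀ y : GaloisField 2 m,
      (Tr m (y*x^2+x+y) = 0 ∧ Tr m (a*x*y+b*x) = 1) ↔
      (Tr m ((x^2+1)*y) = Tr m x ∧ Tr m ((x^2+1)*y) = 1 + Tr m (b*x)) := by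
    intro y
    rw [cnd_iff m x y, sup_iff m a b x y, hax]
  have htr : Tr m (x+b*x) = Tr m x + Tr m (b*x) := Tr_add m x (b*x)
  by_cases h : Tr m (x+b*x) = 1
  · rw [if_pos h, Ncnt, Finset.filter_congr (fun y _ => by
      rw [key y]
      have hx' : Tr m x = 1 + Tr m (b*x) := by
        have : ∀ s t : ZMod 2, s + t = 1 → s = 1 + t := by decide
        exact this _ _ (htr ▸ h)
      rw [← hx', and_self] : ∀ y ∈ Finset.univ, _ ↔ Tr m ((x^2+1)*y) = Tr m x)]
    exact count_tr m hm _ (sq_add_one_ne m x hx1) _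
  · rw [if_neg h, Ncnt, Finset.filter_congr (fun y _ => by
      rw [key y]
      constructor
      · rintro ⟨h1, h2⟩
        apply h
        rw [htr]
        rw [h1] at h2
        have : ∀ s t : ZMod 2, s = 1 + t → s + t = 1 := by decide
        exact this _ _ h2
      · exact False.elim : ∀ y ∈ Finset.univ, _ ↔ False)]
    simp

lemma Ncnt_full (m : ℕ) (hm : 2 ≤ m) (a b x : GaloisField 2 m) (hx1 : x ≠ 1)
    (h : Ncnt m a b x = 2^(m-1)) : a*x = 0 ∨ a*x = x^2+1 := by
  by_contra hc
  push_neg at hc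
  rw [Ncnt_balanced m hm a b x hx1 hc.1 hc.2] at h
  have : (2:ℕ)^(m-2) < 2^(m-1) := Nat.pow_lt_pow_right one_lt_two (by omega)
  omega

/-- the set S of valid x -/
noncomputable def Sset (m : ℕ) : Finset (GaloisField 2 m) :=
  Finset.univ.filter fun x => x ≠ 0 ∧ x ≠ 1

lemma Sset_card (m : ℕ) (hm : m ≠ 0) : (Sset m).card = 2^m - 2 := by
  have h01 : (0 : GaloisField 2 m) ≠ 1 := zero_ne_one
  have : Sset m = Finset.univ \ {0, 1} := by
    ext x
    simp only [Sset, Finset.mem_filter, Finset.mem_univ, true_and, Finset.mem_sdiff,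
      Finset.mem_insert, Finset.mem_singleton]
    tauto
  rw [this, Finset.card_sdiff_of_subset (by intro x _; exact Finset.mem_univ x)]
  rw [Finset.card_univ, card_GF m hm, Finset.card_insert_of_notMem (by simp [h01]),
    Finset.card_singleton]

/-- roots of X² + cX + 1 -/
noncomputable def Rset (m : ℕ) (c : GaloisField 2 m) : Finset (GaloisField 2 m) :=
  Finset.univ.filter fun x => x^2 + c*x + 1 = 0

lemma mem_Rset (m : ℕ) {c x : GaloisField 2 m} :
    x ∈ Rset m c ↔ x^2 + c*x + 1 = 0 := by simp [Rset]

lemma Rset_iff_ax (m : ℕ) (c x : GaloisField 2 m) : c*x = x^2+1 ↔ x ∈ Rset m c := by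
  rw [mem_Rset]
  have h2 := two_eq_zero' m
  constructor
  · intro h; linear_combination h + x^2*h2 + h2
  · intro h; linear_combination h - x^2*h2 - h2

lemma Rset_ne_zero (m : ℕ) {c x : GaloisField 2 m} (h : x ∈ Rset m c) : x ≠ 0 := by
  rintro rfl
  rw [mem_Rset] at h
  simp at h

lemma Rset_ne_one (m : ℕ) {c x : GaloisField 2 m} (hc : c ≠ 0) (h : x ∈ Rset m c) : x ≠ 1 := by
  rintro rfl
  rw [mem_Rset] at h
  have h2 := two_eq_zero' m
  apply hc
  linear_combination h - h2

lemma Rset_mem_S (m : ℕ) {c x : GaloisField 2 m} (hc : c ≠ 0) (h : x ∈ Rset m c) :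
    x ∈ Sset m := by
  simp only [Sset, Finset.mem_filter, Finset.mem_univ, true_and]
  exact ⟨Rset_ne_zero m h, Rset_ne_one m hc h⟩

lemma Rset_struct (m : ℕ) {c : GaloisField 2 m} (hc : c ≠ 0) (hne : (Rset m c).Nonempty) :
    ∃ r s : GaloisField 2 m, r ≠ s ∧ Rset m c = {r, s} ∧ r + s = c ∧ r * s = 1 := by
  obtain ⟨r, hr⟩ := hne
  have h2 := two_eq_zero' m
  have hreq : r^2 + c*r + 1 = 0 := (mem_Rset m).mp hr
  refine ⟨r, c + r, ?_, ?_, by ring_nf; linear_combination r*h2, ?_⟩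
  · intro h
    apply hc
    have : c = 0 := by linear_combination -h
    exact this
  · ext t
    rw [mem_Rset]
    constructor
    · intro ht
      have hfac : (t + r) * (t + r + c) = 0 := by linear_combination ht - hreq + (c*t+c*r)*h2 + h2 + (t*r - t*c + r^2 - 1)*h2
      rcases mul_eq_zero.mp hfac with h | h
      · have : t = r := by linear_combination h - r*h2
        simp [this]
      · have : t = c + r := by linear_combination h - r*h2 - c*h2
        simp [this]
    · intro ht
      simp only [Finset.mem_insert, Finset.mem_singleton] at ht
      rcases ht with rfl | rfl
      · exact hreq
      · linear_combination hreq + (c*r + c^2)*h2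
  · linear_combination -hreq + (c*r + 1)*h2 + (r^2 - 1)*h2

lemma Rset_card_le (m : ℕ) {c : GaloisField 2 m} (hc : c ≠ 0) : (Rset m c).card ≤ 2 := by
  rcases Finset.eq_empty_or_nonempty (Rset m c) with h | h
  · simp [h]
  · obtain ⟨r, s, hrs, heq, -, -⟩ := Rset_struct m hc h
    rw [heq]
    exact (Finset.card_insert_le _ _).trans (by simp)

lemma Rset_disjoint (m : ℕ) {c c' : GaloisField 2 m} (hcc : c ≠ c') :
    Disjoint (Rset m c) (Rset m c') := by
  rw [Finset.disjoint_left]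
  intro x hx hx'
  rw [mem_Rset] at hx hx'
  apply hcc
  have hx0 : x ≠ 0 := Rset_ne_zero m ((mem_Rset m).mpr hx)
  have : (c + c') * x = 0 := by linear_combination hx - hx' + (c'*x)*(two_eq_zero' m)
  rcases mul_eq_zero.mp this with h | h
  · have h2 := two_eq_zero' m
    linear_combination h - c'*h2
  · exact (hx0 h).elim

lemma kernel_contra (m : ℕ) (hm : 3 ≤ m) (c : GaloisField 2 m) (hc : c ≠ 0)
    (R : Finset (GaloisField 2 m)) (hR : R.card ≤ 2)
    (h : ∀ x ∈ Sset m \ R, Tr m (c*x) = 0) : False := by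
  have hm0 : m ≠ 0 := by omega
  have hK : (Finset.univ.filter fun z => Tr m (c*z) = 0).card = 2^(m-1) :=
    count_tr m hm0 c hc 0
  have hsub : insert 0 (Sset m \ R) ⊆ Finset.univ.filter fun z => Tr m (c*z) = 0 := by
    intro z hz
    rcases Finset.mem_insert.mp hz with rfl | hz
    · simp only [Finset.mem_filter, Finset.mem_univ, true_and, mul_zero]
      exact Tr_zero m
    · simp only [Finset.mem_filter, Finset.mem_univ, true_and]
      exact h z hz
  have h0 : (0 : GaloisField 2 m) ∉ Sset m \ R := by
    intro h0
    have := (Finset.mem_sdiff.mp h0).1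
    simp [Sset] at this
  have hcard := Finset.card_le_card hsub
  rw [Finset.card_insert_of_notMem h0, hK] at hcard
  have hsd : (2:ℕ)^m - 2 ≤ (Sset m \ R).card + R.card := by
    rw [← Sset_card m hm0]
    exact Finset.card_le_card_sdiff_add_card
  have hp1 : (2:ℕ)^m = 2*2^(m-1) := by
    rw [← pow_succ']
    congr 1
    omega
  have hp3 : (4:ℕ) ≤ 2^(m-1) := by
    calc (4:ℕ) = 2^2 := by norm_num
    _ ≤ 2^(m-1) := Nat.pow_le_pow_right (by norm_num) (by omega)
  omega

lemma sum_univ_zero (m : ℕ) (hm : 2 ≤ m) : ∑ x : GaloisField 2 m, x = 0 := by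
  have hcard : 2 < Fintype.card (GaloisField 2 m) := by
    rw [card_GF m (by omega)]
    calc (2:ℕ) < 2^2 := by norm_num
    _ ≤ 2^m := Nat.pow_le_pow_right (by norm_num) hm
  have hne : (Finset.univ \ ({0,1} : Finset (GaloisField 2 m))).Nonempty := by
    apply Finset.card_pos.mp
    have := Finset.card_le_card_sdiff_add_card
      (s := (Finset.univ : Finset (GaloisField 2 m))) (t := ({0,1} : Finset (GaloisField 2 m)))
    have h2 : ({0,1} : Finset (GaloisField 2 m)).card ≤ 2 :=
      (Finset.card_insert_le _ _).trans (by simp)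
    rw [Finset.card_univ] at this
    omega
  obtain ⟨c, hc⟩ := hne
  rw [Finset.mem_sdiff] at hc
  have hc0 : c ≠ 0 := fun h => hc.2 (by simp [h])
  have hc1 : c ≠ 1 := fun h => hc.2 (by simp [h])
  have key : ∑ x : GaloisField 2 m, x = ∑ x : GaloisField 2 m, c * x := by
    exact Fintype.sum_equiv (Equiv.mulLeft₀ c hc0) _ _ (fun x => rfl) |>.symm
  rw [← Finset.mul_sum] at key
  have : (c - 1) * ∑ x : GaloisField 2 m, x = 0 := by linear_combination -key
  rcases mul_eq_zero.mp this with h | h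
  · exact absurd (by linear_combination h : c = 1) hc1
  · exact h

noncomputable def Fg (m : ℕ) (a b x : GaloisField 2 m) : Finset (GaloisField 2 m) :=
  Finset.univ.filter fun y => Tr m (y*x^2+x+y) = 0 ∧ Tr m (a*x*y+b*x) = 1

lemma Ncnt_eq_Fg (m : ℕ) (a b x : GaloisField 2 m) : Ncnt m a b x = (Fg m a b x).card := rfl

lemma Tr_split (m : ℕ) (a b a' b' x y : GaloisField 2 m) :
    Tr m ((a+a')*x*y+(b+b')*x) = Tr m (a*x*y+b*x) + Tr m (a'*x*y+b'*x) := by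
  rw [← Tr_add]
  congr 1
  ring

lemma Tr_one (m : ℕ) (h : Odd m) : Tr m 1 = 1 := by
  have h0 : m ≠ 0 := by rintro rfl; simp at h
  have h1 : (1 : GaloisField 2 m) = algebraMap (ZMod 2) _ 1 := by simp
  rw [Tr, h1, Algebra.trace_algebraMap, GaloisField.finrank 2 h0]
  obtain ⟨k, rfl⟩ := h
  rw [nsmul_eq_mul, mul_one]; push_cast; rw [show (2:ZMod 2) = 0 by decide]; ring

lemma Fg_sub (m : ℕ) {a b a' b' x : GaloisField 2 m}
    (hs : ∀ y, Tr m (y*x^2+x+y) = 0 → Tr m (a'*x*y+b'*x) = 1 → Tr m (a*x*y+b*x) = 1) :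
    Fg m a' b' x ⊆ Fg m a b x := by
  intro y hy
  simp only [Fg, Finset.mem_filter, Finset.mem_univ, true_and] at hy ⊢
  exact ⟨hy.1, hs y hy.1 hy.2⟩

lemma Fg_h_sub (m : ℕ) {a b a' b' x : GaloisField 2 m}
    (hs : ∀ y, Tr m (y*x^2+x+y) = 0 → Tr m (a'*x*y+b'*x) = 1 → Tr m (a*x*y+b*x) = 1) :
    Fg m (a+a') (b+b') x ⊆ Fg m a b x \ Fg m a' b' x := by
  intro y hy
  simp only [Fg, Finset.mem_filter, Finset.mem_univ, true_and] at hy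
  obtain ⟨hcnd, hh⟩ := hy
  rw [Tr_split m a b a' b' x y] at hh
  have hf : Tr m (a'*x*y+b'*x) ≠ 1 := by
    intro h1
    rw [h1, hs y hcnd h1] at hh
    exact absurd hh (by decide)
  have hg : Tr m (a*x*y+b*x) = 1 := by
    have h0 : Tr m (a'*x*y+b'*x) = 0 := by
      have : ∀ t : ZMod 2, t ≠ 1 → t = 0 := by decide
      exact this _ hf
    rw [h0, add_zero] at hh
    exact hh
  simp only [Finset.mem_sdiff, Fg, Finset.mem_filter, Finset.mem_univ, true_and]
  exact ⟨⟨hcnd, hg⟩, fun hmem => hf hmem.2⟩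

lemma Sset_eq (m : ℕ) : Sset m = Finset.univ \ {0, 1} := by
  ext x
  simp only [Sset, Finset.mem_filter, Finset.mem_univ, true_and, Finset.mem_sdiff,
    Finset.mem_insert, Finset.mem_singleton]
  tauto

lemma sum_Sset (m : ℕ) (hm : 2 ≤ m) : ∑ x ∈ Sset m, x = 1 := by
  have h := Finset.sum_sdiff (f := fun x : GaloisField 2 m => x)
    (show ({0,1} : Finset (GaloisField 2 m)) ⊆ Finset.univ from fun x _ => Finset.mem_univ x)
  beta_reduce at h
  rw [sum_univ_zero m hm] at h
  have h01 : ∑ x ∈ ({0,1} : Finset (GaloisField 2 m)), x = 1 := by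
    rw [Finset.sum_insert (by simp), Finset.sum_singleton, zero_add]
  rw [h01] at h
  rw [Sset_eq m]
  have h2 := two_eq_zero' m
  linear_combination h - h2

lemma cover_contra (m : ℕ) (hm : 3 ≤ m) (c1 c2 c3 : GaloisField 2 m)
    (h1 : c1 ≠ 0) (h2 : c2 ≠ 0) (h3 : c3 ≠ 0)
    (h12 : c1 ≠ c2) (h13 : c1 ≠ c3) (h23 : c2 ≠ c3) (hsum : c1 + c2 + c3 = 0)
    (hcov : Sset m ⊆ Rset m c1 ∪ Rset m c2 ∪ Rset m c3) : False := by
  have hm0 : m ≠ 0 := by omega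
  have hd12 := Rset_disjoint m h12
  have hd13 := Rset_disjoint m h13
  have hd23 := Rset_disjoint m h23
  have hdU : Disjoint (Rset m c1 ∪ Rset m c2) (Rset m c3) :=
    Finset.disjoint_union_left.mpr ⟨hd13, hd23⟩
  have hcardU : (Rset m c1 ∪ Rset m c2 ∪ Rset m c3).card =
      (Rset m c1).card + (Rset m c2).card + (Rset m c3).card := by
    rw [Finset.card_union_of_disjoint hdU, Finset.card_union_of_disjoint hd12]
  have hcle := Finset.card_le_card hcov
  have hS := Sset_card m hm0
  have hR1 := Rset_card_le m h1
  have hR2 := Rset_card_le m h2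
  have hR3 := Rset_card_le m h3
  have hpow : (8:ℕ) ≤ 2^m := by
    calc (8:ℕ) = 2^3 := by norm_num
    _ ≤ 2^m := Nat.pow_le_pow_right (by norm_num) hm
  -- each Rset has card 2 and the union equals Sset
  have hc1 : (Rset m c1).card = 2 := by omega
  have hc2 : (Rset m c2).card = 2 := by omega
  have hc3 : (Rset m c3).card = 2 := by omega
  have hEq : Sset m = Rset m c1 ∪ Rset m c2 ∪ Rset m c3 :=
    Finset.eq_of_subset_of_card_le hcov (by omega)
  have hsum1 : ∑ x ∈ Sset m, x = 1 := sum_Sset m (by omega)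
  have hsumR : ∀ c : GaloisField 2 m, c ≠ 0 → (Rset m c).card = 2 →
      ∑ x ∈ Rset m c, x = c := by
    intro c hc hcard
    obtain ⟨r, s, hrs, hRe, hsum', -⟩ := Rset_struct m hc (by rw [← Finset.card_pos, hcard]; norm_num)
    rw [hRe, Finset.sum_insert (by simp [hrs]), Finset.sum_singleton]
    exact hsum'
  rw [hEq, Finset.sum_union hdU, Finset.sum_union hd12,
    hsumR c1 h1 hc1, hsumR c2 h2 hc2, hsumR c3 h3 hc3, hsum] at hsum1
  exact one_ne_zero hsum1.symm

lemma kernel4_contra (m : ℕ) (hm : 3 ≤ m) (b c : GaloisField 2 m) (hb : b ≠ 0) (hc : c ≠ 0)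
    (h : ∀ x ∈ Sset m \ Rset m c, Tr m (b*x) = 1) : False := by
  have hm0 : m ≠ 0 := by omega
  have h2 := two_eq_zero' m
  have hPb : (Finset.univ.filter fun z => Tr m (b*z) = 1).card = 2^(m-1) :=
    count_tr m hm0 b hb 1
  have hsub : Sset m \ Rset m c ⊆ Finset.univ.filter fun z => Tr m (b*z) = 1 := by
    intro z hz
    simp only [Finset.mem_filter, Finset.mem_univ, true_and]
    exact h z hz
  have hRc := Rset_card_le m hc
  have hRsub : Rset m c ⊆ Sset m := fun x hx => Rset_mem_S m hc hx
  have hcard1 : (Sset m \ Rset m c).card = (Sset m).card - (Rset m c).card :=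
    Finset.card_sdiff_of_subset hRsub
  have hS := Sset_card m hm0
  have hle := Finset.card_le_card hsub
  have hp1 : (2:ℕ)^m = 2*2^(m-1) := by
    rw [← pow_succ']; congr 1; omega
  have hp3 : (4:ℕ) ≤ 2^(m-1) := by
    calc (4:ℕ) = 2^2 := by norm_num
    _ ≤ 2^(m-1) := Nat.pow_le_pow_right (by norm_num) (by omega)
  -- forces 2^(m-1) = 4, 2^m = 8
  have hpow8 : (2:ℕ)^m = 8 := by omega
  have hcRc : (Rset m c).card = 2 := by omega
  have hEq : Sset m \ Rset m c = Finset.univ.filter fun z => Tr m (b*z) = 1 :=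
    Finset.eq_of_subset_of_card_le hsub (by omega)
  obtain ⟨r, s, hrs, hRe, hsum', hprod⟩ := Rset_struct m hc
    (by rw [← Finset.card_pos, hcRc]; norm_num)
  have hrR : r ∈ Rset m c := by rw [hRe]; simp
  have hr0 : r ≠ 0 := Rset_ne_zero m hrR
  have hr1 : r ≠ 1 := Rset_ne_one m hc hrR
  have hnot : ∀ z : GaloisField 2 m, z ∉ Sset m \ Rset m c → Tr m (b*z) = 0 := by
    intro z hz
    have : z ∉ (Finset.univ.filter fun w => Tr m (b*w) = 1) := by rw [← hEq]; exact hz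
    simp only [Finset.mem_filter, Finset.mem_univ, true_and] at this
    revert this
    generalize Tr m (b*z) = t
    revert t; decide
  have htr1 : Tr m (b*1) = 0 := hnot 1 (by
    intro hmem
    have := (Finset.mem_sdiff.mp hmem).1
    simp [Sset] at this)
  have htrr : Tr m (b*r) = 0 := hnot r (by
    intro hmem
    exact (Finset.mem_sdiff.mp hmem).2 hrR)
  have hw : Tr m (b*(1+r)) = 0 := by
    have e : b*(1+r) = b*1 + b*r := by ring
    rw [e, Tr_add, htr1, htrr, add_zero]
  have hw_not : (1+r) ∉ Sset m \ Rset m c := by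
    rw [hEq]
    simp only [Finset.mem_filter, Finset.mem_univ, true_and, hw]
    decide
  have hwS : (1+r) ∈ Sset m := by
    simp only [Sset, Finset.mem_filter, Finset.mem_univ, true_and]
    constructor
    · intro hz; exact hr1 (by linear_combination hz - h2)
    · intro hz; exact hr0 (by linear_combination hz)
  have hwR : (1+r) ∈ Rset m c := by
    by_contra hn
    exact hw_not (Finset.mem_sdiff.mpr ⟨hwS, hn⟩)
  rw [hRe] at hwR
  simp only [Finset.mem_insert, Finset.mem_singleton] at hwR
  rcases hwR with he | he
  · exact one_ne_zero (by linear_combination he : (1:GaloisField 2 m) = 0)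
  · -- 1 + r = s, and r*s = 1
    have hq : r + r^2 = 1 := by
      have : r * (1+r) = 1 := by rw [he]; exact hprod
      linear_combination this
    have h3 : r^3 = 1 := by linear_combination (r+1)*hq - r^2*h2
    have h7 : r^7 = 1 := by
      have := FiniteField.pow_card_sub_one_eq_one r hr0
      rw [card_GF m hm0, hpow8] at this
      norm_num at this
      exact this
    have : r = 1 := by
      have e : r^7 = (r^3)^2*r := by ring
      rw [h3, one_pow, one_mul, h7] at e
      exact e.symm
    exact hr1 this

lemma zmod_ne_one {t : ZMod 2} (h : t ≠ 1) : t = 0 := by revert h; revert t; decide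

lemma pow_split (m : ℕ) (hm : 2 ≤ m) : (2:ℕ)^(m-1) = 2^(m-2) + 2^(m-2) := by
  have : (2:ℕ)^(m-1) = 2^(m-2)*2 := by rw [← pow_succ]; congr 1; omega
  omega

lemma Ncnt_full_of (m : ℕ) (hm2 : 2 ≤ m) {a b a' b' x : GaloisField 2 m}
    (hm0 : m ≠ 0) (hx1 : x ≠ 1)
    (hs : ∀ y, Tr m (y*x^2+x+y) = 0 → Tr m (a'*x*y+b'*x) = 1 → Tr m (a*x*y+b*x) = 1)
    (hn' : Ncnt m a' b' x = 2^(m-2)) (hnh : Ncnt m (a+a') (b+b') x = 2^(m-2)) :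
    Ncnt m a b x = 2^(m-1) := by
  have hsub1 : Fg m a' b' x ⊆ Fg m a b x := Fg_sub m hs
  have hsubh := Fg_h_sub m hs
  have hdisj : Disjoint (Fg m a' b' x) (Fg m (a+a') (b+b') x) := by
    rw [Finset.disjoint_left]
    intro y hy1 hy2
    exact (Finset.mem_sdiff.mp (hsubh hy2)).2 hy1
  have hunion : Fg m a' b' x ∪ Fg m (a+a') (b+b') x ⊆ Fg m a b x :=
    Finset.union_subset hsub1 (hsubh.trans (Finset.sdiff_subset))
  have hcard := Finset.card_le_card hunion
  rw [Finset.card_union_of_disjoint hdisj] at hcard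
  rw [← Ncnt_eq_Fg, ← Ncnt_eq_Fg, ← Ncnt_eq_Fg, hn', hnh] at hcard
  have hle := Ncnt_le m hm0 a b x hx1
  have := pow_split m hm2
  omega

lemma Fh_elem (m : ℕ) {a b a' b' x : GaloisField 2 m}
    (hs : ∀ y, Tr m (y*x^2+x+y) = 0 → Tr m (a'*x*y+b'*x) = 1 → Tr m (a*x*y+b*x) = 1)
    (hpos : 0 < Ncnt m (a+a') (b+b') x) :
    ∃ y, Tr m (y*x^2+x+y) = 0 ∧ Tr m (a'*x*y+b'*x) = 0 ∧ Tr m (a*x*y+b*x) = 1 := by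
  rw [Ncnt_eq_Fg] at hpos
  obtain ⟨y, hy⟩ := Finset.card_pos.mp hpos
  have hy' := Fg_h_sub m hs hy
  rw [Finset.mem_sdiff] at hy'
  obtain ⟨hyg, hynf⟩ := hy'
  simp only [Fg, Finset.mem_filter, Finset.mem_univ, true_and] at hyg
  refine ⟨y, hyg.1, ?_, hyg.2⟩
  apply zmod_ne_one
  intro hf1
  refine hynf ?_
  simp only [Fg, Finset.mem_filter, Finset.mem_univ, true_and]
  exact ⟨hyg.1, hf1⟩

lemma Nh_zero (m : ℕ) {a b a' b' x : GaloisField 2 m}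
    (hs : ∀ y, Tr m (y*x^2+x+y) = 0 → Tr m (a'*x*y+b'*x) = 1 → Tr m (a*x*y+b*x) = 1)
    (hle : Ncnt m a b x ≤ Ncnt m a' b' x) :
    Ncnt m (a+a') (b+b') x = 0 := by
  have hsub1 : Fg m a' b' x ⊆ Fg m a b x := Fg_sub m hs
  have heq : Fg m a' b' x = Fg m a b x := Finset.eq_of_subset_of_card_le hsub1 hle
  have hsubh := Fg_h_sub m hs
  rw [← heq] at hsubh
  simp only [Finset.sdiff_self, Finset.subset_empty] at hsubh
  rw [Ncnt_eq_Fg, hsubh, Finset.card_empty]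

theorem stmt17 (m : ℕ) (hm : 3 ≤ m) (hodd : Odd m) (a b a' b' : GaloisField 2 m)
    (hne : ∃ x y : GaloisField 2 m, x ≠ 0 ∧ Tr m (y * x ^ 2 + x + y) = 0 ∧
      Tr m (a * x * y + b * x) = 1)
    (hne' : ∃ x y : GaloisField 2 m, x ≠ 0 ∧ Tr m (y * x ^ 2 + x + y) = 0 ∧
      Tr m (a' * x * y + b' * x) = 1)
    (hsupp : ∀ x y : GaloisField 2 m, x ≠ 0 → Tr m (y * x ^ 2 + x + y) = 0 →
      Tr m (a' * x * y + b' * x) = 1 → Tr m (a * x * y + b * x) = 1) :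
    ∀ x y : GaloisField 2 m, x ≠ 0 → Tr m (y * x ^ 2 + x + y) = 0 →
      Tr m (a' * x * y + b' * x) = Tr m (a * x * y + b * x) := by
  have h2 := two_eq_zero' m
  have hm0 : m ≠ 0 := by omega
  have hm2 : 2 ≤ m := by omega
  have hT1 : Tr m 1 = 1 := Tr_one m hodd
  have hppos : (0:ℕ) < 2^(m-1) := Nat.pow_pos (by norm_num)
  have hppos2 : (0:ℕ) < 2^(m-2) := Nat.pow_pos (by norm_num)
  have hp3 : (4:ℕ) ≤ 2^(m-1) := by
    calc (4:ℕ) = 2^2 := by norm_num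
    _ ≤ 2^(m-1) := Nat.pow_le_pow_right (by norm_num) (by omega)
  -- any x occurring in D₂ is ≠ 1
  have hxne1 : ∀ x y : GaloisField 2 m, Tr m (y*x^2+x+y) = 0 → x ≠ 1 := by
    intro x y hcnd
    rintro rfl
    have e : y*(1:GaloisField 2 m)^2+1+y = 1 := by linear_combination y*h2
    rw [e, hT1] at hcnd
    exact absurd hcnd (by decide)
  have hs : ∀ x : GaloisField 2 m, x ≠ 0 →
      ∀ y, Tr m (y*x^2+x+y) = 0 → Tr m (a'*x*y+b'*x) = 1 → Tr m (a*x*y+b*x) = 1 :=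
    fun x hx0 y => hsupp x y hx0
  -- Step 1 : a + a' = 0
  have hA : a + a' = 0 := by
    by_contra hA0
    by_cases ha' : a' = 0
    · -- Branch 1
      obtain ⟨x0, y0, hx00, hc0, hf0⟩ := hne'
      have hb' : b' ≠ 0 := by
        rintro rfl
        rw [ha'] at hf0
        have e : (0:GaloisField 2 m)*x0*y0+0*x0 = 0 := by ring
        rw [e, Tr_zero] at hf0
        exact absurd hf0 (by decide)
      refine kernel_contra m hm b' hb' (Rset m (a+a')) (Rset_card_le m hA0) ?_
      intro x hx
      obtain ⟨hxS, hxR⟩ := Finset.mem_sdiff.mp hx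
      obtain ⟨hx0, hx1⟩ : x ≠ 0 ∧ x ≠ 1 := by simpa [Sset] using hxS
      have hNh : Ncnt m (a+a') (b+b') x = 2^(m-2) := by
        apply Ncnt_balanced m hm2 _ _ x hx1 (mul_ne_zero hA0 hx0)
        intro he; exact hxR ((Rset_iff_ax m _ x).mp he)
      obtain ⟨y, hcnd, hf, hg⟩ := Fh_elem m (hs x hx0) (by rw [hNh]; exact hppos2)
      have e : a'*x*y+b'*x = b'*x := by rw [ha']; ring
      rw [e] at hf
      exact hf
    · -- Branches 2 and 3 : a' ≠ 0, a+a' ≠ 0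
      -- for x outside both root sets, the big fiber is full
      have hfull : ∀ x, x ∈ Sset m → x ∉ Rset m a' → x ∉ Rset m (a+a') →
          a*x = 0 ∨ a*x = x^2+1 := by
        intro x hxS hxR' hxRD
        obtain ⟨hx0, hx1⟩ : x ≠ 0 ∧ x ≠ 1 := by simpa [Sset] using hxS
        have hn' : Ncnt m a' b' x = 2^(m-2) := by
          apply Ncnt_balanced m hm2 _ _ x hx1 (mul_ne_zero ha' hx0)
          intro he; exact hxR' ((Rset_iff_ax m _ x).mp he)
        have hnh : Ncnt m (a+a') (b+b') x = 2^(m-2) := by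
          apply Ncnt_balanced m hm2 _ _ x hx1 (mul_ne_zero hA0 hx0)
          intro he; exact hxRD ((Rset_iff_ax m _ x).mp he)
        have hNf := Ncnt_full_of m hm2 hm0 hx1 (hs x hx0) hn' hnh
        exact Ncnt_full m hm2 a b x hx1 hNf
      by_cases ha : a = 0
      · -- Branch 3
        have hb : b ≠ 0 := by
          obtain ⟨x0, y0, hx00, hc0, hg0⟩ := hne
          rintro rfl
          rw [ha] at hg0
          have e : (0:GaloisField 2 m)*x0*y0+0*x0 = 0 := by ring
          rw [e, Tr_zero] at hg0
          exact absurd hg0 (by decide)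
        have hRD : Rset m (a+a') = Rset m a' := by rw [ha, zero_add]
        refine kernel4_contra m hm b a' hb ha' ?_
        intro x hx
        obtain ⟨hxS, hxR'⟩ := Finset.mem_sdiff.mp hx
        obtain ⟨hx0, hx1⟩ : x ≠ 0 ∧ x ≠ 1 := by simpa [Sset] using hxS
        rcases hfull x hxS hxR' (by rw [hRD]; exact hxR') with hc | hc
        · -- a*x = 0 : a = 0 indeed, N = full forces Tr(b*x) = 1
          have hn' : Ncnt m a' b' x = 2^(m-2) := by
            apply Ncnt_balanced m hm2 _ _ x hx1 (mul_ne_zero ha' hx0)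
            intro he; exact hxR' ((Rset_iff_ax m _ x).mp he)
          have hnh : Ncnt m (a+a') (b+b') x = 2^(m-2) := by
            apply Ncnt_balanced m hm2 _ _ x hx1 (mul_ne_zero hA0 hx0)
            intro he
            exact hxR' ((hRD ▸ (Rset_iff_ax m _ x).mp he))
          have hNf := Ncnt_full_of m hm2 hm0 hx1 (hs x hx0) hn' hnh
          rw [ha] at hNf
          rw [Ncnt_a_zero m hm0 b x hx1] at hNf
          by_cases hT : Tr m (b*x) = 1
          · exact hT
          · rw [if_neg hT] at hNf; omega
        · -- a*x = x^2+1 contradicts a = 0, x ≠ 1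
          exfalso
          rw [ha, zero_mul] at hc
          exact sq_add_one_ne m x hx1 hc.symm
      · -- Branch 2
        refine cover_contra m hm a' (a+a') a ha' hA0 ha ?_ ?_ ?_ ?_ ?_
        · intro he
          exact ha (by linear_combination -he)
        · intro he
          exact hA0 (by linear_combination he + a*h2)
        · intro he
          exact ha' (by linear_combination he)
        · linear_combination (a+a')*h2
        · intro x hxS
          by_cases hxR' : x ∈ Rset m a'
          · exact Finset.mem_union_left _ (Finset.mem_union_left _ hxR')
          by_cases hxRD : x ∈ Rset m (a+a')
          · exact Finset.mem_union_left _ (Finset.mem_union_right _ hxRD)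
          obtain ⟨hx0, hx1⟩ : x ≠ 0 ∧ x ≠ 1 := by simpa [Sset] using hxS
          rcases hfull x hxS hxR' hxRD with hc | hc
          · exact absurd hc (mul_ne_zero ha hx0)
          · exact Finset.mem_union_right _ ((Rset_iff_ax m a x).mp hc)
  -- Step 2 : b + b' = 0
  have haa : a = a' := by linear_combination hA - a'*h2
  have hB : b + b' = 0 := by
    by_contra hB0
    by_cases ha' : a' = 0
    · -- Branch 5 : a = a' = 0
      have haZ : a = 0 := by rw [haa, ha']
      obtain ⟨x0, y0, hx00, hc0, hf0⟩ := hne'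
      have hb' : b' ≠ 0 := by
        rintro rfl
        rw [ha'] at hf0
        have e : (0:GaloisField 2 m)*x0*y0+0*x0 = 0 := by ring
        rw [e, Tr_zero] at hf0
        exact absurd hf0 (by decide)
      set P' : Finset (GaloisField 2 m) := (Sset m).filter (fun x => Tr m (b'*x) = 1) with hP'
      set P : Finset (GaloisField 2 m) := (Sset m).filter (fun x => Tr m (b*x) = 1) with hP
      set Q : Finset (GaloisField 2 m) := (Sset m).filter (fun x => Tr m ((b+b')*x) = 1) with hQ
      have hP'P : P' ⊆ P := by
        intro x hx
        rw [hP', Finset.mem_filter] at hx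
        obtain ⟨hxS, hTb'⟩ := hx
        obtain ⟨hx0, hx1⟩ : x ≠ 0 ∧ x ≠ 1 := by simpa [Sset] using hxS
        have hHx : (0:ℕ) < (Finset.univ.filter fun y =>
            Tr m (y*x^2+x+y) = 0).card := by
          rw [Hx_card m hm0 x hx1]; exact hppos
        obtain ⟨y, hy⟩ := Finset.card_pos.mp hHx
        simp only [Finset.mem_filter, Finset.mem_univ, true_and] at hy
        have hf1 : Tr m (a'*x*y+b'*x) = 1 := by
          have e : a'*x*y+b'*x = b'*x := by rw [ha']; ring
          rw [e]; exact hTb'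
        have hg1 := hsupp x y hx0 hy hf1
        have e : a*x*y+b*x = b*x := by rw [haZ]; ring
        rw [e] at hg1
        rw [hP, Finset.mem_filter]
        exact ⟨hxS, hg1⟩
      -- general fact : for c ≠ 0, the set of x with Tr(c x)=1 minus {1} sits in Sset-filter
      have hbig : ∀ c : GaloisField 2 m, c ≠ 0 →
          2^(m-1) ≤ ((Sset m).filter (fun x => Tr m (c*x) = 1)).card + 1 := by
        intro c hc
        have hcnt := count_tr m hm0 c hc 1
        have hsub : (Finset.univ.filter fun z => Tr m (c*z) = 1) ⊆
            ((Sset m).filter (fun x => Tr m (c*x) = 1)) ∪ {1} := by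
          intro z hz
          simp only [Finset.mem_filter, Finset.mem_univ, true_and] at hz
          have hz0 : z ≠ 0 := by
            rintro rfl
            rw [mul_zero, Tr_zero] at hz
            exact absurd hz (by decide)
          by_cases hz1 : z = 1
          · exact Finset.mem_union_right _ (by simp [hz1])
          · refine Finset.mem_union_left _ ?_
            rw [Finset.mem_filter]
            refine ⟨?_, hz⟩
            simp only [Sset, Finset.mem_filter, Finset.mem_univ, true_and]
            exact ⟨hz0, hz1⟩
        have := Finset.card_le_card hsub
        rw [hcnt] at this
        have hcu := Finset.card_union_le
          ((Sset m).filter (fun x => Tr m (c*x) = 1)) ({1} : Finset (GaloisField 2 m))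
        simp only [Finset.card_singleton] at hcu
        omega
      have hQP : Q ⊆ P \ P' := by
        intro x hx
        rw [hQ, Finset.mem_filter] at hx
        obtain ⟨hxS, hTq⟩ := hx
        have hsplit : Tr m (b*x) + Tr m (b'*x) = 1 := by
          rw [← Tr_add]
          have e : b*x + b'*x = (b+b')*x := by ring
          rw [e]; exact hTq
        have hb'x : Tr m (b'*x) = 0 := by
          apply zmod_ne_one
          intro h1
          have hxP' : x ∈ P' := by rw [hP', Finset.mem_filter]; exact ⟨hxS, h1⟩
          have hxP := hP'P hxP'
          rw [hP, Finset.mem_filter] at hxP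
          rw [h1, hxP.2] at hsplit
          exact absurd hsplit (by decide)
        have hbx : Tr m (b*x) = 1 := by rw [hb'x, add_zero] at hsplit; exact hsplit
        rw [Finset.mem_sdiff]
        constructor
        · rw [hP, Finset.mem_filter]; exact ⟨hxS, hbx⟩
        · intro hxP'
          rw [hP', Finset.mem_filter] at hxP'
          rw [hxP'.2] at hb'x
          exact absurd hb'x (by decide)
      have hbQ := hbig (b+b') hB0
      have hbP' := hbig b' hb'
      rw [← hQ] at hbQ
      rw [← hP'] at hbP'
      have hbnum : 0 < P'.card := by omega
      have hbexists := Finset.card_pos.mp hbnum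
      obtain ⟨z, hz⟩ := hbexists
      have hzP := hP'P hz
      rw [hP, Finset.mem_filter] at hzP
      have hbne : b ≠ 0 := by
        rintro rfl
        rw [zero_mul, Tr_zero] at hzP
        exact absurd hzP.2 (by decide)
      have hPcard : P.card ≤ 2^(m-1) := by
        have hsub : P ⊆ Finset.univ.filter fun z => Tr m (b*z) = 1 := by
          intro z hz
          rw [hP, Finset.mem_filter] at hz
          simp only [Finset.mem_filter, Finset.mem_univ, true_and]
          exact hz.2
        have := Finset.card_le_card hsub
        rwa [count_tr m hm0 b hbne 1] at this
      have hsd : (P \ P').card = P.card - P'.card := Finset.card_sdiff_of_subset hP'P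
      have hQle := Finset.card_le_card hQP
      omega
    · -- Branch 4 : a = a' ≠ 0
      refine kernel_contra m hm (b+b') hB0 (Rset m a') (Rset_card_le m ha') ?_
      intro x hx
      obtain ⟨hxS, hxR'⟩ := Finset.mem_sdiff.mp hx
      obtain ⟨hx0, hx1⟩ : x ≠ 0 ∧ x ≠ 1 := by simpa [Sset] using hxS
      have hn' : Ncnt m a' b' x = 2^(m-2) := by
        apply Ncnt_balanced m hm2 _ _ x hx1 (mul_ne_zero ha' hx0)
        intro he; exact hxR' ((Rset_iff_ax m _ x).mp he)
      have hng : Ncnt m a b x = 2^(m-2) := by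
        rw [haa]
        apply Ncnt_balanced m hm2 _ _ x hx1 (mul_ne_zero ha' hx0)
        intro he; exact hxR' ((Rset_iff_ax m _ x).mp he)
      have hNh := Nh_zero m (hs x hx0) (by omega)
      have hzero : a + a' = 0 := hA
      rw [hzero] at hNh
      rw [Ncnt_a_zero m hm0 (b+b') x hx1] at hNh
      by_cases hT : Tr m ((b+b')*x) = 1
      · rw [if_pos hT] at hNh; omega
      · exact zmod_ne_one hT
  intro x y hx0 hcnd
  have ea : a' = a := by linear_combination hA - a*h2
  have eb : b' = b := by linear_combination hB - b*h2
  rw [ea, eb]
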